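/- Theorem 4 (uplink–downlink duality for cell-free massive MIMO with limited fronthaul): fix positive integers M, N, K, reals ρ > 0 and r ≥ 0, positive matrices β, γ ∈ ℝ^{M×K}, nonnegative symmetric pilot correlations π_{kk'} (k ≠ k'), coefficients u ∈ ℝ^{M×K} with Σ_m u_{mk} γ_{mk} ≠ 0 for every k, and power vectors q, p ∈ ℝ^K. Assume that all the uplink denominators Den_k^UP(q) and downlink denominators Den_k^DL(p) are strictly positive and that the same SINR is realized in the uplink and the virtual downlink for every user, i.e., SINR_k^DL(U,p) = SINR_k^UP(U,q) for all k = 1,…,K. Then the total transmit powers are related by Σ_{k=1}^K q_k = (r + 1) · Σ_{m=1}^M Σ_{k=1}^K γ_{mk} · p_k · u_{mk}²; equivalently, with w_{mk} = √(p_k)·u_{mk}, Σ_k q_k = (σ_ė²/ȧ² + 1) Σ_{m,k} γ_{mk} w_{mk}² (the normalization constant matching the SINR expressions (37)–(38)). -/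
import Mathlib


open Finset

/-- Uplink SINR denominator of user `k` (equation (38) of the paper). -/
noncomputable def DenUP {M K : ℕ} (N : ℕ) (ρ r : ℝ)
    (β γ u : Matrix (Fin M) (Fin K) ℝ) (π : Fin K → Fin K → ℝ)
    (q : Fin K → ℝ) (k : Fin K) : ℝ :=
  (N : ℝ) ^ 2 * ∑ k' ∈ Finset.univ.erase k,
      q k' * π k k' * (∑ m, u m k * γ m k * β m k' / β m k) ^ 2 +
    (N : ℝ) * ∑ k', q k' * ∑ m, (u m k) ^ 2 * β m k' *
      (r * (2 * β m k - γ m k) + γ m k) +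
    (N : ℝ) / ρ * (r + 1) * ∑ m, (u m k) ^ 2 * γ m k

/-- Uplink SINR of user `k` (equation (38) of the paper). -/
noncomputable def SINRUP {M K : ℕ} (N : ℕ) (ρ r : ℝ)
    (β γ u : Matrix (Fin M) (Fin K) ℝ) (π : Fin K → Fin K → ℝ)
    (q : Fin K → ℝ) (k : Fin K) : ℝ :=
  (N : ℝ) ^ 2 * q k * (∑ m, u m k * γ m k) ^ 2 / DenUP N ρ r β γ u π q k

/-- Virtual downlink SINR denominator of user `k` (equation (37) of the paper). -/
noncomputable def DenDL {M K : ℕ} (N : ℕ) (ρ r : ℝ)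
    (β γ u : Matrix (Fin M) (Fin K) ℝ) (π : Fin K → Fin K → ℝ)
    (p : Fin K → ℝ) (k : Fin K) : ℝ :=
  (N : ℝ) ^ 2 * ∑ k' ∈ Finset.univ.erase k,
      p k' * π k' k * (∑ m, u m k' * γ m k' * β m k / β m k') ^ 2 +
    (N : ℝ) * ∑ k', p k' * ∑ m, (u m k') ^ 2 * β m k *
      (r * (2 * β m k' - γ m k') + γ m k') +
    (N : ℝ) / ρ

/-- Virtual downlink SINR of user `k` (equation (37) of the paper). -/
noncomputable def SINRDL {M K : ℕ} (N : ℕ) (ρ r : ℝ)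
    (β γ u : Matrix (Fin M) (Fin K) ℝ) (π : Fin K → Fin K → ℝ)
    (p : Fin K → ℝ) (k : Fin K) : ℝ :=
  (N : ℝ) ^ 2 * p k * (∑ m, u m k * γ m k) ^ 2 / DenDL N ρ r β γ u π p k

lemma sum_erase_swap {K : ℕ} (f : Fin K → Fin K → ℝ) :
    ∑ k, ∑ k' ∈ Finset.univ.erase k, f k k'
      = ∑ k, ∑ k' ∈ Finset.univ.erase k, f k' k := by
  exact Finset.sum_comm' (fun x y => by simp [Finset.mem_erase, eq_comm])

/-- Theorem 4 of the paper (uplink–downlink duality for cell-free massive MIMO with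
limited fronthaul): if the same SINR is realized in the uplink and the virtual
downlink for every user, then the total uplink transmit power equals
`(r + 1) · Σ_{m,k} γ_{mk} p_k u_{mk}²`. -/
theorem uplink_downlink_duality
    {M K : ℕ} (hM : 0 < M) (hK : 0 < K) (N : ℕ) (hN : 0 < N)
    (ρ r : ℝ) (hρ : 0 < ρ) (hr : 0 ≤ r)
    (β γ u : Matrix (Fin M) (Fin K) ℝ)
    (hβ : ∀ m k, 0 < β m k) (hγ : ∀ m k, 0 < γ m k)
    (π : Fin K → Fin K → ℝ) (hπ : ∀ k k', 0 ≤ π k k')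
    (hπsymm : ∀ k k', k ≠ k' → π k k' = π k' k)
    (hu : ∀ k, (∑ m, u m k * γ m k) ≠ 0)
    (q p : Fin K → ℝ)
    (hDenUP : ∀ k, 0 < DenUP N ρ r β γ u π q k)
    (hDenDL : ∀ k, 0 < DenDL N ρ r β γ u π p k)
    (hdual : ∀ k, SINRDL N ρ r β γ u π p k = SINRUP N ρ r β γ u π q k) :
    ∑ k, q k = (r + 1) * ∑ m, ∑ k, γ m k * p k * (u m k) ^ 2 := by
  have key : ∀ k, p k * DenUP N ρ r β γ u π q k = q k * DenDL N ρ r β γ u π p k := by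
    intro k
    have h := hdual k
    unfold SINRDL SINRUP at h
    rw [div_eq_div_iff (hDenDL k).ne' (hDenUP k).ne'] at h
    have hNS : ((N : ℝ) ^ 2 * (∑ m, u m k * γ m k) ^ 2) ≠ 0 :=
      mul_ne_zero (pow_ne_zero 2 (Nat.cast_ne_zero.mpr hN.ne')) (pow_ne_zero 2 (hu k))
    refine mul_left_cancel₀ hNS ?_
    linear_combination h
  have hsum : ∑ k, p k * DenUP N ρ r β γ u π q k = ∑ k, q k * DenDL N ρ r β γ u π p k :=
    Finset.sum_congr rfl fun k _ => key k
  have hA : ∑ k, p k * ((N:ℝ)^2 * ∑ k' ∈ Finset.univ.erase k,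
        q k' * π k k' * (∑ m, u m k * γ m k * β m k' / β m k) ^ 2)
      = ∑ k, q k * ((N:ℝ)^2 * ∑ k' ∈ Finset.univ.erase k,
        p k' * π k' k * (∑ m, u m k' * γ m k' * β m k / β m k') ^ 2) := by
    have e1 : ∑ k, p k * ((N:ℝ)^2 * ∑ k' ∈ Finset.univ.erase k,
        q k' * π k k' * (∑ m, u m k * γ m k * β m k' / β m k) ^ 2)
        = ∑ k, ∑ k' ∈ Finset.univ.erase k,
          p k * q k' * π k k' * (∑ m, u m k * γ m k * β m k' / β m k) ^ 2 * (N:ℝ)^2 := by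
      refine Finset.sum_congr rfl fun k _ => ?_
      rw [Finset.mul_sum, Finset.mul_sum]
      exact Finset.sum_congr rfl fun k' _ => by ring
    have e2 : ∑ k, q k * ((N:ℝ)^2 * ∑ k' ∈ Finset.univ.erase k,
        p k' * π k' k * (∑ m, u m k' * γ m k' * β m k / β m k') ^ 2)
        = ∑ k, ∑ k' ∈ Finset.univ.erase k,
          p k' * q k * π k' k * (∑ m, u m k' * γ m k' * β m k / β m k') ^ 2 * (N:ℝ)^2 := by
      refine Finset.sum_congr rfl fun k _ => ?_
      rw [Finset.mul_sum, Finset.mul_sum]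
      exact Finset.sum_congr rfl fun k' _ => by ring
    rw [e1, e2, sum_erase_swap (f := fun k k' =>
      p k * q k' * π k k' * (∑ m, u m k * γ m k * β m k' / β m k) ^ 2 * (N:ℝ)^2)]
  have hB : ∑ k, p k * ((N:ℝ) * ∑ k', q k' * ∑ m, (u m k) ^ 2 * β m k' *
        (r * (2 * β m k - γ m k) + γ m k))
      = ∑ k, q k * ((N:ℝ) * ∑ k', p k' * ∑ m, (u m k') ^ 2 * β m k *
        (r * (2 * β m k' - γ m k') + γ m k')) := by
    have e1 : ∑ k, p k * ((N:ℝ) * ∑ k', q k' * ∑ m, (u m k) ^ 2 * β m k' *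
        (r * (2 * β m k - γ m k) + γ m k))
        = ∑ k, ∑ k', p k * q k' * (∑ m, (u m k) ^ 2 * β m k' *
          (r * (2 * β m k - γ m k) + γ m k)) * (N:ℝ) := by
      refine Finset.sum_congr rfl fun k _ => ?_
      rw [Finset.mul_sum, Finset.mul_sum]
      exact Finset.sum_congr rfl fun k' _ => by ring
    have e2 : ∑ k, q k * ((N:ℝ) * ∑ k', p k' * ∑ m, (u m k') ^ 2 * β m k *
        (r * (2 * β m k' - γ m k') + γ m k'))
        = ∑ k, ∑ k', p k' * q k * (∑ m, (u m k') ^ 2 * β m k *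
          (r * (2 * β m k' - γ m k') + γ m k')) * (N:ℝ) := by
      refine Finset.sum_congr rfl fun k _ => ?_
      rw [Finset.mul_sum, Finset.mul_sum]
      exact Finset.sum_congr rfl fun k' _ => by ring
    rw [e1, e2, Finset.sum_comm]
  have hC : ∑ k, p k * ((N:ℝ)/ρ * (r+1) * ∑ m, (u m k) ^ 2 * γ m k)
      = ∑ k, q k * ((N:ℝ)/ρ) := by
    have h1 : ∑ k, (p k * ((N:ℝ)^2 * ∑ k' ∈ Finset.univ.erase k,
          q k' * π k k' * (∑ m, u m k * γ m k * β m k' / β m k) ^ 2)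
        + p k * ((N:ℝ) * ∑ k', q k' * ∑ m, (u m k) ^ 2 * β m k' *
          (r * (2 * β m k - γ m k) + γ m k))
        + p k * ((N:ℝ)/ρ * (r+1) * ∑ m, (u m k) ^ 2 * γ m k))
        = ∑ k, (q k * ((N:ℝ)^2 * ∑ k' ∈ Finset.univ.erase k,
          p k' * π k' k * (∑ m, u m k' * γ m k' * β m k / β m k') ^ 2)
        + q k * ((N:ℝ) * ∑ k', p k' * ∑ m, (u m k') ^ 2 * β m k *
          (r * (2 * β m k' - γ m k') + γ m k'))
        + q k * ((N:ℝ)/ρ)) := by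
      refine Eq.trans ?_ (Eq.trans hsum ?_)
      · exact Finset.sum_congr rfl fun k _ => by simp only [DenUP]; ring
      · exact Finset.sum_congr rfl fun k _ => by simp only [DenDL]; ring
    simp only [Finset.sum_add_distrib] at h1
    linarith [hA, hB, h1]
  have hNρ : (N:ℝ)/ρ ≠ 0 := div_ne_zero (Nat.cast_ne_zero.mpr hN.ne') hρ.ne'
  have hgoal : (N:ℝ)/ρ * ∑ k, q k
      = (N:ℝ)/ρ * ((r + 1) * ∑ m, ∑ k, γ m k * p k * (u m k) ^ 2) := by
    calc (N:ℝ)/ρ * ∑ k, q k = ∑ k, q k * ((N:ℝ)/ρ) := by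
          rw [Finset.mul_sum]; exact Finset.sum_congr rfl fun k _ => mul_comm _ _
      _ = ∑ k, p k * ((N:ℝ)/ρ * (r+1) * ∑ m, (u m k) ^ 2 * γ m k) := hC.symm
      _ = (N:ℝ)/ρ * ((r + 1) * ∑ k, ∑ m, γ m k * p k * (u m k) ^ 2) := by
          rw [Finset.mul_sum, Finset.mul_sum]
          refine Finset.sum_congr rfl fun k _ => ?_
          rw [Finset.mul_sum, Finset.mul_sum, Finset.mul_sum, Finset.mul_sum]
          exact Finset.sum_congr rfl fun m _ => by ring
      _ = (N:ℝ)/ρ * ((r + 1) * ∑ m, ∑ k, γ m k * p k * (u m k) ^ 2) := by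
          rw [Finset.sum_comm]
  exact mul_left_cancel₀ hNρ hgoal
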